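/- A quasi-metric space (X,d) has the property that every bounded ideal of (X,d) has a colimit if and only if (X,d) is standard and the partially ordered set BX of formal balls is a local dcpo. -/

import Mathlib

open scoped ENNReal NNReal

universe u v w

/-- A quasi-metric space structure on `X`: distances valued in `[0,∞]`, with
`d x x = 0`, the triangle inequality, and separatedness. -/
structure QuasiMetric (X : Type u) where
  d : X → X → ℝ≥0∞
  d_self : ∀ x, d x x = 0
  d_triangle : ∀ x y z, d x z ≤ d x y + d y z
  d_separated : ∀ x y, d x y = 0 → d y x = 0 → x = y

namespace QuasiMetric

variable {X : Type u}

/-- The order on formal balls: `(x, r) ⊑ (y, s)` iff `s + d x y ≤ r`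
(equivalently `d x y ≤ r - s`). -/
def ballLE (q : QuasiMetric X) (p p' : X × ℝ≥0) : Prop :=
  (p'.2 : ℝ≥0∞) + q.d p.1 p'.1 ≤ (p.2 : ℝ≥0∞)

/-- `b` is a least upper bound of the set `S` of formal balls. -/
def IsBallLUB (q : QuasiMetric X) (S : Set (X × ℝ≥0)) (b : X × ℝ≥0) : Prop :=
  (∀ p ∈ S, q.ballLE p b) ∧ ∀ c, (∀ p ∈ S, q.ballLE p c) → q.ballLE b c

/-- `le` is a directed preorder (reflexive, transitive, directed). -/
def DirectedPre {D : Type v} (le : D → D → Prop) : Prop :=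
  (∀ i, le i i) ∧ (∀ i j k, le i j → le j k → le i k) ∧ ∀ i j, ∃ k, le i k ∧ le j k

/-- A net `x : D → X` is forward Cauchy: `inf_i sup_{k ≥ j ≥ i} d (x j) (x k) = 0`. -/
def ForwardCauchy (q : QuasiMetric X) {D : Type v} (le : D → D → Prop) (x : D → X) : Prop :=
  (⨅ i, ⨆ j, ⨆ (_ : le i j), ⨆ k, ⨆ (_ : le j k), q.d (x j) (x k)) = 0

/-- `a` is a Yoneda limit of the net `x : D → X`:
for all `y`, `d a y = inf_i sup_{j ≥ i} d (x j) y`. -/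
def IsYonedaLimit (q : QuasiMetric X) {D : Type v} (le : D → D → Prop) (x : D → X) (a : X) :
    Prop :=
  ∀ y, q.d a y = ⨅ i, ⨆ j, ⨆ (_ : le i j), q.d (x j) y

/-- `(X, d)` is Yoneda complete: every forward Cauchy net has a Yoneda limit. -/
def YonedaComplete (q : QuasiMetric X) : Prop :=
  ∀ (D : Type u) (le : D → D → Prop), DirectedPre le → Nonempty D →
    ∀ x : D → X, q.ForwardCauchy le x → ∃ a, q.IsYonedaLimit le x a

/-- `(X, d)` is standard: whenever a directed set of formal balls (viewed as a monotone
net indexed by itself) has a least upper bound, the corresponding forward Cauchy net of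
centers has a Yoneda limit. -/
def Standard (q : QuasiMetric X) : Prop :=
  ∀ S : Set (X × ℝ≥0), S.Nonempty → DirectedOn q.ballLE S →
    (∃ b, q.IsBallLUB S b) →
    ∃ a, q.IsYonedaLimit (fun p p' : ↥S => q.ballLE p.1 p'.1) (fun p : ↥S => p.1.1) a

/-- A weight of `(X, d)`: `φ x ≤ φ y + d x y`. -/
def IsWeight (q : QuasiMetric X) (φ : X → ℝ≥0∞) : Prop :=
  ∀ x y, φ x ≤ φ y + q.d x y

/-- The quasi-metric on weights: `ρ(φ, ψ) = sup_y (ψ y ⊖ φ y)`. -/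
noncomputable def rho {Y : Type v} (φ ψ : Y → ℝ≥0∞) : ℝ≥0∞ := ⨆ y, ψ y - φ y

/-- An ideal of `(X, d)`: a weight `φ` with `inf φ = 0` such that
`ρ(φ, min (λ, μ)) = min (ρ(φ,λ), ρ(φ,μ))` for all weights `λ`, `μ`. -/
def IsIdeal (q : QuasiMetric X) (φ : X → ℝ≥0∞) : Prop :=
  q.IsWeight φ ∧ (⨅ x, φ x) = 0 ∧
    ∀ l m : X → ℝ≥0∞, q.IsWeight l → q.IsWeight m →
      rho φ (fun x => min (l x) (m x)) = min (rho φ l) (rho φ m)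

/-- A weight `φ` is bounded: there are `r < ∞` and `a ∈ X` with `d x a ≤ r + φ x` for all `x`. -/
def BoundedWeight (q : QuasiMetric X) (φ : X → ℝ≥0∞) : Prop :=
  ∃ (r : ℝ≥0) (a : X), ∀ x, q.d x a ≤ (r : ℝ≥0∞) + φ x

/-- `b` is a colimit of the weight `φ`: for all `y`, `d b y = sup_x (d x y ⊖ φ x)`. -/
def IsColimit (q : QuasiMetric X) (φ : X → ℝ≥0∞) (b : X) : Prop :=
  ∀ y, q.d b y = ⨆ x, q.d x y - φ x

/-- The poset of formal balls is a dcpo: every (nonempty) directed subset has a lub. -/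
def BallDcpo (q : QuasiMetric X) : Prop :=
  ∀ S : Set (X × ℝ≥0), S.Nonempty → DirectedOn q.ballLE S → ∃ b, q.IsBallLUB S b

/-- The poset of formal balls is a local dcpo: every (nonempty) directed subset with an
upper bound has a lub. -/
def BallLocalDcpo (q : QuasiMetric X) : Prop :=
  ∀ S : Set (X × ℝ≥0), S.Nonempty → DirectedOn q.ballLE S →
    (∃ c, ∀ p ∈ S, q.ballLE p c) → ∃ b, q.IsBallLUB S b

/-- `u` is way below `v` in the poset of formal balls. -/
def ballWayBelow (q : QuasiMetric X) (u v : X × ℝ≥0) : Prop :=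
  ∀ S : Set (X × ℝ≥0), S.Nonempty → DirectedOn q.ballLE S →
    ∀ s, q.IsBallLUB S s → q.ballLE v s → ∃ p ∈ S, q.ballLE u p

/-- The poset of formal balls is a continuous poset: for every `p`, the set of elements
way below `p` is (nonempty) directed and has `p` as its least upper bound. -/
def BallContinuousPoset (q : QuasiMetric X) : Prop :=
  ∀ p : X × ℝ≥0,
    {u : X × ℝ≥0 | q.ballWayBelow u p}.Nonempty ∧
    DirectedOn q.ballLE {u : X × ℝ≥0 | q.ballWayBelow u p} ∧
    q.IsBallLUB {u : X × ℝ≥0 | q.ballWayBelow u p} p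

/-- A function `χ` is `𝓙`-closed: `ρ(ψ, χ) ≥ χ (colim ψ)` for every bounded ideal `ψ`
possessing a colimit. -/
def JClosed (q : QuasiMetric X) (χ : X → ℝ≥0∞) : Prop :=
  ∀ ψ : X → ℝ≥0∞, q.IsIdeal ψ → q.BoundedWeight ψ → ∀ c, q.IsColimit ψ c → χ c ≤ rho ψ χ

/-- `(X, d)` is a continuous `𝕁`-algebra: every bounded ideal has a colimit, and there is
a map `⇓` assigning to each `x` a bounded ideal `⇓x` with `ρ(⇓x, φ) = d x (colim φ)` for
all `x` and all bounded ideals `φ`. -/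
def ContinuousJAlgebra (q : QuasiMetric X) : Prop :=
  ∃ colim : (X → ℝ≥0∞) → X,
    (∀ φ, q.IsIdeal φ → q.BoundedWeight φ → q.IsColimit φ (colim φ)) ∧
    ∃ w : X → X → ℝ≥0∞,
      (∀ x, q.IsIdeal (w x) ∧ q.BoundedWeight (w x)) ∧
      ∀ (x : X) (φ : X → ℝ≥0∞), q.IsIdeal φ → q.BoundedWeight φ →
        rho (w x) φ = q.d x (colim φ)

/-- The quasi-metric space of all functions `X → [0,∞]` satisfying a predicate `P`
(e.g. the bounded weights, or the bounded ideals), with the quasi-metric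
`ρ(φ, ψ) = sup_x (ψ x ⊖ φ x)`. -/
noncomputable def weightSpace (q : QuasiMetric X) (P : (X → ℝ≥0∞) → Prop) :
    QuasiMetric {φ : X → ℝ≥0∞ // P φ} where
  d φ ψ := rho φ.1 ψ.1
  d_self φ := by simp [rho]
  d_triangle φ ψ χ := by
    refine iSup_le fun x => ?_
    calc χ.1 x - φ.1 x ≤ (χ.1 x - ψ.1 x) + (ψ.1 x - φ.1 x) := tsub_le_tsub_add_tsub
    _ ≤ rho ψ.1 χ.1 + rho φ.1 ψ.1 :=
        add_le_add (le_iSup (fun y => χ.1 y - ψ.1 y) x) (le_iSup (fun y => ψ.1 y - φ.1 y) x)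
    _ = rho φ.1 ψ.1 + rho ψ.1 χ.1 := add_comm _ _
  d_separated φ ψ h1 h2 := by
    apply Subtype.ext
    funext x
    have hx1 : ψ.1 x - φ.1 x ≤ 0 := by
      rw [← h1]; exact le_iSup (fun y => ψ.1 y - φ.1 y) x
    have hx2 : φ.1 x - ψ.1 x ≤ 0 := by
      rw [← h2]; exact le_iSup (fun y => φ.1 y - ψ.1 y) x
    exact le_antisymm (tsub_eq_zero_iff_le.mp (le_antisymm hx2 zero_le))
      (tsub_eq_zero_iff_le.mp (le_antisymm hx1 zero_le))

end QuasiMetric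

namespace QuasiMetric

section Aux

variable {X : Type u} (q : QuasiMetric X)

lemma ballLE_refl (p : X × ℝ≥0) : q.ballLE p p := by
  simp [ballLE, q.d_self]

lemma ballLE_trans {p p' p'' : X × ℝ≥0} (h : q.ballLE p p') (h' : q.ballLE p' p'') :
    q.ballLE p p'' := by
  unfold ballLE at *
  calc (p''.2 : ℝ≥0∞) + q.d p.1 p''.1
      ≤ (p''.2 : ℝ≥0∞) + (q.d p.1 p'.1 + q.d p'.1 p''.1) := by
        gcongr; exact q.d_triangle _ _ _
    _ = q.d p.1 p'.1 + ((p''.2 : ℝ≥0∞) + q.d p'.1 p''.1) := by ring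
    _ ≤ q.d p.1 p'.1 + (p'.2 : ℝ≥0∞) := by gcongr
    _ = (p'.2 : ℝ≥0∞) + q.d p.1 p'.1 := add_comm _ _
    _ ≤ (p.2 : ℝ≥0∞) := h

variable (S : Set (X × ℝ≥0))

/-- `sup_{j ⊒ i} f j` over the directed set `S` of formal balls. -/
noncomputable def A (i : ↥S) (f : ↥S → ℝ≥0∞) : ℝ≥0∞ :=
  ⨆ j : ↥S, ⨆ _ : q.ballLE i.1 j.1, f j

/-- The "limsup weight" of the net of centers of `S`. -/
noncomputable def netW (z : X) : ℝ≥0∞ :=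
  ⨅ i : ↥S, q.A S i (fun j => q.d z j.1.1)

/-- The infimum of the radii of `S`. -/
noncomputable def radInf : ℝ≥0 := ⨅ i : ↥S, i.1.2

variable {q S}

lemma le_A {i j : ↥S} (h : q.ballLE i.1 j.1) (f : ↥S → ℝ≥0∞) : f j ≤ q.A S i f :=
  le_iSup₂ (f := fun j _ => f j) j h

lemma A_le {i : ↥S} {f : ↥S → ℝ≥0∞} {c : ℝ≥0∞} (h : ∀ j : ↥S, q.ballLE i.1 j.1 → f j ≤ c) :
    q.A S i f ≤ c :=
  iSup₂_le h

lemma A_anti {i i' : ↥S} (h : q.ballLE i.1 i'.1) (f : ↥S → ℝ≥0∞) :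
    q.A S i' f ≤ q.A S i f :=
  A_le fun j hj => le_A (ballLE_trans q h hj) f

lemma A_mono {i : ↥S} {f g : ↥S → ℝ≥0∞} (h : ∀ j : ↥S, q.ballLE i.1 j.1 → f j ≤ g j) :
    q.A S i f ≤ q.A S i g :=
  A_le fun j hj => (h j hj).trans (le_A hj g)

lemma netW_le (i : ↥S) (z : X) : q.netW S z ≤ q.A S i (fun j => q.d z j.1.1) :=
  iInf_le _ i

lemma radInf_le (i : ↥S) : radInf S ≤ i.1.2 :=
  ciInf_le (OrderBot.bddBelow _) i

lemma exists_small [Nonempty ↥S] {ε : ℝ≥0} (hε : 0 < ε) : ∃ i : ↥S, i.1.2 < radInf S + ε :=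
  exists_lt_of_ciInf_lt (lt_add_of_pos_right _ hε)

lemma dist_le_rad_sub {i j : ↥S} (h : q.ballLE i.1 j.1) :
    q.d i.1.1 j.1.1 ≤ (i.1.2 : ℝ≥0∞) - (radInf S : ℝ≥0∞) := by
  refine ENNReal.le_sub_of_add_le_left ENNReal.coe_ne_top ?_
  calc ((radInf S : ℝ≥0∞)) + q.d i.1.1 j.1.1 ≤ (j.1.2 : ℝ≥0∞) + q.d i.1.1 j.1.1 := by
        gcongr; exact_mod_cast radInf_le j
    _ ≤ (i.1.2 : ℝ≥0∞) := h

lemma dist_le_eps {ε : ℝ≥0} {i : ↥S} (hi : i.1.2 < radInf S + ε) {j k : ↥S}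
    (hij : q.ballLE i.1 j.1) (hjk : q.ballLE j.1 k.1) : q.d j.1.1 k.1.1 ≤ ε := by
  calc q.d j.1.1 k.1.1 ≤ (j.1.2 : ℝ≥0∞) - (radInf S : ℝ≥0∞) := dist_le_rad_sub hjk
    _ ≤ (i.1.2 : ℝ≥0∞) - (radInf S : ℝ≥0∞) := by
        gcongr; exact_mod_cast (le_trans le_self_add hij : (j.1.2 : ℝ≥0∞) ≤ i.1.2)
    _ ≤ (ε : ℝ≥0∞) := by
        rw [tsub_le_iff_right]
        exact_mod_cast le_of_lt (by rw [add_comm]; exact_mod_cast hi)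

lemma netW_le_eps {ε : ℝ≥0} {i : ↥S} (hi : i.1.2 < radInf S + ε) {j : ↥S}
    (hij : q.ballLE i.1 j.1) : q.netW S j.1.1 ≤ ε :=
  (netW_le j _).trans (A_le fun k hk => dist_le_eps hi hij hk)

lemma key (hdir : DirectedOn q.ballLE S) [Nonempty ↥S] {l : X → ℝ≥0∞} (hl : q.IsWeight l) :
    (⨆ z, l z - q.netW S z) = ⨅ i : ↥S, q.A S i (fun j => l j.1.1) := by
  apply le_antisymm
  · refine iSup_le fun z => ?_
    rw [tsub_le_iff_right]
    have h : ∀ i i' : ↥S,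
        l z ≤ q.A S i' (fun j => l j.1.1) + q.A S i (fun j => q.d z j.1.1) := by
      intro i i'
      obtain ⟨k, hkS, hik, hi'k⟩ := hdir i.1 i.2 i'.1 i'.2
      calc l z ≤ l k.1 + q.d z k.1 := hl z k.1
        _ ≤ q.A S i' (fun j => l j.1.1) + q.A S i (fun j => q.d z j.1.1) :=
          add_le_add (le_A (j := ⟨k, hkS⟩) hi'k _) (le_A (j := ⟨k, hkS⟩) hik _)
    rw [ENNReal.iInf_add]
    refine le_iInf fun i' => ?_
    show l z ≤ q.A S i' (fun j => l j.1.1) + ⨅ i : ↥S, q.A S i (fun j => q.d z j.1.1)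
    rw [ENNReal.add_iInf]
    exact le_iInf fun i => h i i'
  · refine ENNReal.le_of_forall_pos_le_add fun ε hε _ => ?_
    obtain ⟨i₀, hi₀⟩ := exists_small (S := S) hε
    refine (iInf_le _ i₀).trans (A_le fun j hj => ?_)
    calc l j.1.1 ≤ (l j.1.1 - q.netW S j.1.1) + q.netW S j.1.1 := le_tsub_add
      _ ≤ (⨆ z, l z - q.netW S z) + (ε : ℝ≥0∞) :=
        add_le_add (le_iSup (fun z => l z - q.netW S z) j.1.1) (netW_le_eps hi₀ hj)

lemma isWeight_netW : q.IsWeight (q.netW S) := fun z z' => by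
  have h : ∀ i : ↥S,
      q.A S i (fun j => q.d z j.1.1) ≤ q.A S i (fun j => q.d z' j.1.1) + q.d z z' := fun i =>
    A_le fun j hj => (q.d_triangle z z' j.1.1).trans
      (by rw [add_comm]; exact add_le_add_left (le_A hj _) _)
  calc q.netW S z ≤ ⨅ i : ↥S, (q.A S i (fun j => q.d z' j.1.1) + q.d z z') :=
        le_iInf fun i => (netW_le i z).trans (h i)
    _ = q.netW S z' + q.d z z' := ENNReal.iInf_add.symm

lemma netW_inf_zero [Nonempty ↥S] : (⨅ z, q.netW S z) = 0 := by
  refine le_antisymm ?_ zero_le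
  refine ENNReal.le_of_forall_pos_le_add fun ε hε _ => ?_
  obtain ⟨i₀, hi₀⟩ := exists_small (S := S) hε
  rw [zero_add]
  exact (iInf_le _ i₀.1.1).trans (netW_le_eps hi₀ (ballLE_refl q i₀.1))

lemma isWeight_d_right (y : X) : q.IsWeight (fun z => q.d z y) := fun z z' =>
  (q.d_triangle z z' y).trans (by rw [add_comm])

lemma netW_isIdeal (hdir : DirectedOn q.ballLE S) [Nonempty ↥S] : q.IsIdeal (q.netW S) := by
  refine ⟨isWeight_netW, netW_inf_zero, fun l m hl hm => ?_⟩
  have hmin : q.IsWeight (fun x => min (l x) (m x)) := fun x y =>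
    (min_le_min (hl x y) (hm x y)).trans (le_of_eq (min_add_add_right _ _ _))
  show (⨆ z, min (l z) (m z) - q.netW S z)
      = min (⨆ z, l z - q.netW S z) (⨆ z, m z - q.netW S z)
  rw [key hdir hmin, key hdir hl, key hdir hm]
  apply le_antisymm
  · exact le_min (iInf_mono fun i => A_mono fun j _ => min_le_left _ _)
      (iInf_mono fun i => A_mono fun j _ => min_le_right _ _)
  · refine le_iInf fun i => ENNReal.le_of_forall_pos_le_add fun ε hε _ => ?_
    obtain ⟨iε, hiε⟩ := exists_small (S := S) hε
    obtain ⟨k0, hk0S, h1, h2⟩ := hdir i.1 i.2 iε.1 iε.2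
    set i₀ : ↥S := ⟨k0, hk0S⟩ with hi₀def
    by_cases hcof : ∀ j : ↥S, q.ballLE i₀.1 j.1 →
        ∃ j' : ↥S, q.ballLE j.1 j'.1 ∧ l j'.1.1 ≤ m j'.1.1
    · calc min (⨅ i : ↥S, q.A S i fun j => l j.1.1) (⨅ i : ↥S, q.A S i fun j => m j.1.1)
          ≤ ⨅ i : ↥S, q.A S i fun j => l j.1.1 := min_le_left _ _
        _ ≤ q.A S i₀ (fun j => l j.1.1) := iInf_le _ i₀
        _ ≤ q.A S i₀ (fun j => min (l j.1.1) (m j.1.1)) + (ε : ℝ≥0∞) := by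
            refine A_le fun j hj => ?_
            obtain ⟨j', hjj', hlm⟩ := hcof j hj
            calc l j.1.1 ≤ l j'.1.1 + q.d j.1.1 j'.1.1 := hl _ _
              _ ≤ min (l j'.1.1) (m j'.1.1) + (ε : ℝ≥0∞) :=
                add_le_add (le_min le_rfl hlm)
                  (dist_le_eps hiε (ballLE_trans q h2 hj) hjj')
              _ ≤ q.A S i₀ (fun j => min (l j.1.1) (m j.1.1)) + (ε : ℝ≥0∞) :=
                add_le_add_left (le_A (ballLE_trans q hj hjj') _) _
        _ ≤ q.A S i (fun j => min (l j.1.1) (m j.1.1)) + (ε : ℝ≥0∞) :=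
            add_le_add_left (A_anti h1 _) _
    · push_neg at hcof
      obtain ⟨j₁, hj₁, hall⟩ := hcof
      calc min (⨅ i : ↥S, q.A S i fun j => l j.1.1) (⨅ i : ↥S, q.A S i fun j => m j.1.1)
          ≤ ⨅ i : ↥S, q.A S i fun j => m j.1.1 := min_le_right _ _
        _ ≤ q.A S j₁ (fun j => m j.1.1) := iInf_le _ j₁
        _ ≤ q.A S j₁ (fun j => min (l j.1.1) (m j.1.1)) :=
            A_mono fun j' hj' => le_min (le_of_lt (hall j' hj')) le_rfl
        _ ≤ q.A S i (fun j => min (l j.1.1) (m j.1.1)) :=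
            A_anti (ballLE_trans q h1 hj₁) _
        _ ≤ q.A S i (fun j => min (l j.1.1) (m j.1.1)) + (ε : ℝ≥0∞) := le_self_add

lemma netW_bounded (hdir : DirectedOn q.ballLE S) {c : X × ℝ≥0}
    (hub : ∀ p ∈ S, q.ballLE p c) (i₀ : ↥S) : q.BoundedWeight (q.netW S) := by
  refine ⟨i₀.1.2, c.1, fun z => ?_⟩
  show q.d z c.1 ≤ (i₀.1.2 : ℝ≥0∞) + ⨅ i : ↥S, q.A S i (fun j => q.d z j.1.1)
  rw [ENNReal.add_iInf]
  refine le_iInf fun i => ?_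
  obtain ⟨k, hkS, hik, hi₀k⟩ := hdir i.1 i.2 i₀.1 i₀.2
  calc q.d z c.1 ≤ q.d z k.1 + q.d k.1 c.1 := q.d_triangle _ _ _
    _ ≤ q.A S i (fun j => q.d z j.1.1) + (i₀.1.2 : ℝ≥0∞) := by
      refine add_le_add (le_A (j := ⟨k, hkS⟩) hik _) ?_
      calc q.d k.1 c.1 ≤ (c.2 : ℝ≥0∞) + q.d k.1 c.1 := le_add_self
        _ ≤ (k.2 : ℝ≥0∞) := hub k hkS
        _ ≤ (i₀.1.2 : ℝ≥0∞) := le_trans le_self_add hi₀k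
    _ = (i₀.1.2 : ℝ≥0∞) + q.A S i (fun j => q.d z j.1.1) := add_comm _ _

lemma colimit_d_le {φ : X → ℝ≥0∞} {b : X} (hb : q.IsColimit φ b) (z : X) :
    q.d z b ≤ φ z := by
  have h0 : (⨆ x, q.d x b - φ x) = 0 := by rw [← hb b, q.d_self]
  have h1 : q.d z b - φ z = 0 :=
    le_antisymm (h0 ▸ le_iSup (fun x => q.d x b - φ x) z) zero_le
  exact tsub_eq_zero_iff_le.mp h1

lemma netW_colimit_yoneda (hdir : DirectedOn q.ballLE S) [Nonempty ↥S] {b : X}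
    (hb : q.IsColimit (q.netW S) b) :
    q.IsYonedaLimit (fun p p' : ↥S => q.ballLE p.1 p'.1) (fun p : ↥S => p.1.1) b := fun y => by
  rw [hb y, key hdir (isWeight_d_right y)]; rfl

lemma netW_colimit_lub (hdir : DirectedOn q.ballLE S) [Nonempty ↥S] {b : X}
    (hb : q.IsColimit (q.netW S) b) : q.IsBallLUB S (b, radInf S) := by
  constructor
  · intro p hp
    show (radInf S : ℝ≥0∞) + q.d p.1 b ≤ (p.2 : ℝ≥0∞)
    have h1 : q.d p.1 b ≤ (p.2 : ℝ≥0∞) - (radInf S : ℝ≥0∞) :=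
      le_trans (colimit_d_le hb p.1) <|
        (netW_le ⟨p, hp⟩ p.1).trans (A_le fun j hj => dist_le_rad_sub hj)
    calc (radInf S : ℝ≥0∞) + q.d p.1 b
        ≤ (radInf S : ℝ≥0∞) + ((p.2 : ℝ≥0∞) - (radInf S : ℝ≥0∞)) := add_le_add_right h1 _
      _ = (p.2 : ℝ≥0∞) := add_tsub_cancel_of_le (by exact_mod_cast radInf_le ⟨p, hp⟩)
  · intro c hc
    show (c.2 : ℝ≥0∞) + q.d b c.1 ≤ (radInf S : ℝ≥0∞)
    have htr : (c.2 : ℝ≥0∞) ≤ (radInf S : ℝ≥0∞) := by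
      exact_mod_cast le_ciInf fun i : ↥S => show c.2 ≤ i.1.2 by
        exact_mod_cast (le_trans le_self_add (hc i.1 i.2) : (c.2 : ℝ≥0∞) ≤ (i.1.2 : ℝ≥0∞))
    have hinf : (⨅ i : ↥S, ((i.1.2 : ℝ≥0∞) - (c.2 : ℝ≥0∞)))
        ≤ (radInf S : ℝ≥0∞) - (c.2 : ℝ≥0∞) := by
      refine ENNReal.le_of_forall_pos_le_add fun ε hε _ => ?_
      obtain ⟨i, hi⟩ := exists_small (S := S) hε
      refine (iInf_le _ i).trans ?_
      calc ((i.1.2 : ℝ≥0∞)) - (c.2 : ℝ≥0∞)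
          ≤ ((radInf S : ℝ≥0∞) + (ε : ℝ≥0∞)) - (c.2 : ℝ≥0∞) := by
            gcongr; exact_mod_cast le_of_lt hi
        _ = ((radInf S : ℝ≥0∞) - (c.2 : ℝ≥0∞)) + (ε : ℝ≥0∞) :=
            (ENNReal.sub_add_eq_add_sub htr ENNReal.coe_ne_top).symm
    have hz : ∀ z, q.d z c.1 ≤ q.netW S z + ((radInf S : ℝ≥0∞) - (c.2 : ℝ≥0∞)) := by
      intro z
      have h : ∀ i : ↥S, q.d z c.1
          ≤ q.A S i (fun j => q.d z j.1.1) + ((i.1.2 : ℝ≥0∞) - (c.2 : ℝ≥0∞)) := fun i =>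
        calc q.d z c.1 ≤ q.d z i.1.1 + q.d i.1.1 c.1 := q.d_triangle _ _ _
          _ ≤ q.A S i (fun j => q.d z j.1.1) + ((i.1.2 : ℝ≥0∞) - (c.2 : ℝ≥0∞)) :=
            add_le_add (le_A (ballLE_refl q i.1) _)
              (ENNReal.le_sub_of_add_le_left ENNReal.coe_ne_top (hc i.1 i.2))
      have hdirsum : ∀ i j : ↥S, ∃ k : ↥S,
          (q.A S k (fun j => q.d z j.1.1) + ((k.1.2 : ℝ≥0∞) - (c.2 : ℝ≥0∞)))
          ≤ q.A S i (fun j => q.d z j.1.1) + ((j.1.2 : ℝ≥0∞) - (c.2 : ℝ≥0∞)) := by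
        intro i j
        obtain ⟨k, hkS, hik, hjk⟩ := hdir i.1 i.2 j.1 j.2
        refine ⟨⟨k, hkS⟩, add_le_add (A_anti hik _) (tsub_le_tsub_right ?_ _)⟩
        show (k.2 : ℝ≥0∞) ≤ (j.1.2 : ℝ≥0∞)
        exact le_trans le_self_add hjk
      calc q.d z c.1
          ≤ ⨅ i : ↥S, (q.A S i (fun j => q.d z j.1.1) + ((i.1.2 : ℝ≥0∞) - (c.2 : ℝ≥0∞))) :=
            le_iInf h
        _ = q.netW S z + ⨅ i : ↥S, ((i.1.2 : ℝ≥0∞) - (c.2 : ℝ≥0∞)) :=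
            (ENNReal.iInf_add_iInf hdirsum).symm
        _ ≤ q.netW S z + ((radInf S : ℝ≥0∞) - (c.2 : ℝ≥0∞)) := add_le_add_right hinf _
    have hd : q.d b c.1 ≤ (radInf S : ℝ≥0∞) - (c.2 : ℝ≥0∞) := by
      rw [hb c.1]
      refine iSup_le fun z => ?_
      rw [tsub_le_iff_right, add_comm]
      exact hz z
    calc (c.2 : ℝ≥0∞) + q.d b c.1
        ≤ (c.2 : ℝ≥0∞) + ((radInf S : ℝ≥0∞) - (c.2 : ℝ≥0∞)) := add_le_add_right hd _
      _ = (radInf S : ℝ≥0∞) := add_tsub_cancel_of_le htr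

end Aux

section Rev

variable {X : Type u} {q : QuasiMetric X} {φ : X → ℝ≥0∞}

lemma isWeight_const_sub (q : QuasiMetric X) (x : X) (c : ℝ≥0∞) :
    q.IsWeight (fun z => c - q.d x z) := by
  intro z z'
  calc c - q.d x z ≤ (c - q.d x z - q.d z z') + q.d z z' := le_tsub_add
    _ = (c - (q.d x z + q.d z z')) + q.d z z' := by rw [tsub_tsub]
    _ ≤ (c - q.d x z') + q.d z z' :=
      add_le_add_left (tsub_le_tsub_left (q.d_triangle x z z') _) _

lemma extraction (hw : q.IsWeight φ)
    (hmin : ∀ l m : X → ℝ≥0∞, q.IsWeight l → q.IsWeight m →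
      rho φ (fun x => min (l x) (m x)) = min (rho φ l) (rho φ m))
    {r₀ s : ℝ≥0} {x : X} (hx : (r₀ : ℝ≥0∞) + φ x < (s : ℝ≥0∞))
    (y : X) (c₂ : ℝ≥0∞) (hρm : 0 < rho φ (fun z => c₂ - q.d y z)) :
    ∃ (w : X) (u : ℝ≥0), ((r₀ : ℝ≥0∞) + φ w < (u : ℝ≥0∞)) ∧
      ((u : ℝ≥0∞) + q.d x w ≤ (s : ℝ≥0∞)) ∧
      ((u : ℝ≥0∞) + q.d y w ≤ (r₀ : ℝ≥0∞) + c₂) := by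
  set c₁ : ℝ≥0∞ := (s : ℝ≥0∞) - (r₀ : ℝ≥0∞) with hc₁
  set l : X → ℝ≥0∞ := fun z => c₁ - q.d x z with hldef
  set m : X → ℝ≥0∞ := fun z => c₂ - q.d y z with hmdef
  have hr₀s : (r₀ : ℝ≥0∞) ≤ (s : ℝ≥0∞) := le_of_lt (lt_of_le_of_lt le_self_add hx)
  have hφx : φ x < c₁ :=
    ((ENNReal.cancel_of_ne ENNReal.coe_ne_top).lt_tsub_iff_left).mpr hx
  have hg : 0 < c₁ - φ x := tsub_pos_iff_lt.mpr hφx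
  have hlx : l x = c₁ := by rw [hldef]; simp [q.d_self]
  have hρl : c₁ - φ x ≤ rho φ l := by
    calc c₁ - φ x = l x - φ x := by rw [hlx]
      _ ≤ rho φ l := le_iSup (fun z => l z - φ z) x
  set γ : ℝ≥0∞ := min (min (c₁ - φ x) (rho φ m)) 1 / 2 with hγdef
  have hρm' : 0 < rho φ m := hρm
  have hbase_pos : min (min (c₁ - φ x) (rho φ m)) 1 ≠ 0 :=
    (lt_min (lt_min hg hρm') zero_lt_one).ne'
  have hbase_ne_top : min (min (c₁ - φ x) (rho φ m)) 1 ≠ ∞ :=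
    ne_top_of_le_ne_top ENNReal.one_ne_top (min_le_right _ _)
  have hγlt : γ < min (min (c₁ - φ x) (rho φ m)) 1 :=
    ENNReal.half_lt_self hbase_pos hbase_ne_top
  have hγ0 : γ ≠ 0 := by
    rw [hγdef]
    exact (ENNReal.div_pos hbase_pos (by norm_num)).ne'
  have hγtop : γ ≠ ∞ := (hγlt.trans_le (min_le_right _ _)).ne_top
  have hγmin : γ < rho φ (fun z => min (l z) (m z)) := by
    rw [hmin l m (isWeight_const_sub q x c₁) (isWeight_const_sub q y c₂)]
    exact hγlt.trans_le <| le_min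
      ((min_le_left _ _).trans ((min_le_left _ _).trans hρl))
      ((min_le_left _ _).trans (min_le_right _ _))
  obtain ⟨w, hwγ⟩ := lt_iSup_iff.mp hγmin
  have hlw : γ < l w - φ w :=
    hwγ.trans_le (tsub_le_tsub_right (min_le_left _ _) _)
  have hmw : γ < m w - φ w :=
    hwγ.trans_le (tsub_le_tsub_right (min_le_right _ _) _)
  have hlw' : γ < c₁ - (q.d x w + φ w) := by rwa [hldef, tsub_tsub] at hlw
  have hmw' : γ < c₂ - (q.d y w + φ w) := by rwa [hmdef, tsub_tsub] at hmw
  have hE₁ : q.d x w + φ w ≤ c₁ :=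
    (tsub_pos_iff_lt.mp (lt_of_le_of_lt zero_le hlw')).le
  have hE₂ : q.d y w + φ w ≤ c₂ :=
    (tsub_pos_iff_lt.mp (lt_of_le_of_lt zero_le hmw')).le
  have hγE₁ : γ + (q.d x w + φ w) ≤ c₁ := by
    calc γ + (q.d x w + φ w) ≤ (c₁ - (q.d x w + φ w)) + (q.d x w + φ w) :=
          add_le_add_left hlw'.le _
      _ = c₁ := tsub_add_cancel_of_le hE₁
  have hγE₂ : γ + (q.d y w + φ w) ≤ c₂ := by
    calc γ + (q.d y w + φ w) ≤ (c₂ - (q.d y w + φ w)) + (q.d y w + φ w) :=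
          add_le_add_left hmw'.le _
      _ = c₂ := tsub_add_cancel_of_le hE₂
  have hφw_top : φ w ≠ ∞ :=
    ne_top_of_le_ne_top (ne_top_of_le_ne_top ENNReal.coe_ne_top
      (hE₁.trans (tsub_le_self.trans le_rfl))) le_add_self
  refine ⟨w, r₀ + γ.toNNReal + (φ w).toNNReal, ?_, ?_, ?_⟩
  · have hcoe : ((r₀ + γ.toNNReal + (φ w).toNNReal : ℝ≥0) : ℝ≥0∞)
        = (r₀ : ℝ≥0∞) + (γ + φ w) := by
      push_cast
      rw [ENNReal.coe_toNNReal hγtop, ENNReal.coe_toNNReal hφw_top, add_assoc]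
    rw [hcoe]
    refine ENNReal.add_lt_add_left ENNReal.coe_ne_top ?_
    rw [add_comm]
    exact ENNReal.lt_add_right hφw_top hγ0
  · have hcoe : ((r₀ + γ.toNNReal + (φ w).toNNReal : ℝ≥0) : ℝ≥0∞) + q.d x w
        = (r₀ : ℝ≥0∞) + (γ + (q.d x w + φ w)) := by
      push_cast
      rw [ENNReal.coe_toNNReal hγtop, ENNReal.coe_toNNReal hφw_top]
      ring
    rw [hcoe]
    calc (r₀ : ℝ≥0∞) + (γ + (q.d x w + φ w)) ≤ (r₀ : ℝ≥0∞) + c₁ := add_le_add_right hγE₁ _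
      _ = (s : ℝ≥0∞) := add_tsub_cancel_of_le hr₀s
  · have hcoe : ((r₀ + γ.toNNReal + (φ w).toNNReal : ℝ≥0) : ℝ≥0∞) + q.d y w
        = (r₀ : ℝ≥0∞) + (γ + (q.d y w + φ w)) := by
      push_cast
      rw [ENNReal.coe_toNNReal hγtop, ENNReal.coe_toNNReal hφw_top]
      ring
    rw [hcoe]
    exact add_le_add_right hγE₂ _

end Rev

end QuasiMetric

open QuasiMetric in
/-- every bounded ideal of `(X, d)` has a colimit iff `(X, d)` is standard
and the poset `BX` of formal balls is a local dcpo. -/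
theorem stmt14 {X : Type u} (q : QuasiMetric X) :
    (∀ φ : X → ℝ≥0∞, q.IsIdeal φ → q.BoundedWeight φ → ∃ b, q.IsColimit φ b) ↔
      (q.Standard ∧ q.BallLocalDcpo) := by
  constructor
  · intro h
    constructor
    · intro S hne hdir hlub
      haveI : Nonempty ↥S := hne.to_subtype
      obtain ⟨b0, hlub0⟩ := hlub
      obtain ⟨b, hb⟩ := h _ (netW_isIdeal hdir)
        (netW_bounded hdir hlub0.1 (Classical.arbitrary _))
      exact ⟨b, netW_colimit_yoneda hdir hb⟩
    · rintro S hne hdir ⟨c, hub⟩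
      haveI : Nonempty ↥S := hne.to_subtype
      obtain ⟨b, hb⟩ := h _ (netW_isIdeal hdir)
        (netW_bounded hdir hub (Classical.arbitrary _))
      exact ⟨_, netW_colimit_lub hdir hb⟩
  · rintro ⟨hstd, hldc⟩ φ hideal hbdd
    obtain ⟨hw, hinf, hmin⟩ := hideal
    obtain ⟨r₀, a, hbd⟩ := hbdd
    set S : Set (X × ℝ≥0) := {p | (r₀ : ℝ≥0∞) + φ p.1 < (p.2 : ℝ≥0∞)} with hSdef
    have hsmall : ∀ ε : ℝ≥0, 0 < ε → ∃ p : X × ℝ≥0, p ∈ S ∧ p.2 = r₀ + ε := by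
      intro ε hε
      obtain ⟨z, hz⟩ : ∃ z, φ z < (ε : ℝ≥0∞) := by
        refine iInf_lt_iff.mp ?_
        rw [hinf]
        exact_mod_cast hε
      refine ⟨(z, r₀ + ε), ?_, rfl⟩
      show (r₀ : ℝ≥0∞) + φ z < ((r₀ + ε : ℝ≥0) : ℝ≥0∞)
      push_cast
      exact ENNReal.add_lt_add_left ENNReal.coe_ne_top hz
    have hne : S.Nonempty := by
      obtain ⟨p, hp, -⟩ := hsmall 1 one_pos
      exact ⟨p, hp⟩
    have hub : ∀ p ∈ S, q.ballLE p (a, (0 : ℝ≥0)) := by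
      intro p hp
      show ((0 : ℝ≥0) : ℝ≥0∞) + q.d p.1 a ≤ (p.2 : ℝ≥0∞)
      rw [ENNReal.coe_zero, zero_add]
      exact (hbd p.1).trans (le_of_lt hp)
    have hρpos : ∀ p ∈ S, 0 < rho φ (fun z => ((p.2 : ℝ≥0∞) - (r₀ : ℝ≥0∞)) - q.d p.1 z) := by
      intro p hp
      have h1 : φ p.1 < (p.2 : ℝ≥0∞) - (r₀ : ℝ≥0∞) :=
        ((ENNReal.cancel_of_ne ENNReal.coe_ne_top).lt_tsub_iff_left).mpr hp
      refine lt_of_lt_of_le ?_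
        (le_iSup (fun z => (((p.2 : ℝ≥0∞) - (r₀ : ℝ≥0∞)) - q.d p.1 z) - φ z) p.1)
      rw [q.d_self, tsub_zero]
      exact tsub_pos_iff_lt.mpr h1
    have hdir : DirectedOn q.ballLE S := by
      rintro p₁ hp₁ p₂ hp₂
      obtain ⟨w, u, hmem, hw1, hw2⟩ := extraction hw hmin hp₁ p₂.1
        ((p₂.2 : ℝ≥0∞) - (r₀ : ℝ≥0∞)) (hρpos p₂ hp₂)
      refine ⟨(w, u), hmem, hw1, ?_⟩
      show (u : ℝ≥0∞) + q.d p₂.1 w ≤ (p₂.2 : ℝ≥0∞)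
      calc (u : ℝ≥0∞) + q.d p₂.1 w ≤ (r₀ : ℝ≥0∞) + ((p₂.2 : ℝ≥0∞) - (r₀ : ℝ≥0∞)) := hw2
        _ = (p₂.2 : ℝ≥0∞) :=
          add_tsub_cancel_of_le (le_of_lt (lt_of_le_of_lt le_self_add hp₂))
    haveI : Nonempty ↥S := hne.to_subtype
    obtain ⟨b, hb⟩ := hstd S hne hdir (hldc S hne hdir ⟨(a, 0), hub⟩)
    refine ⟨b, fun y => ?_⟩
    have hyb : q.d b y = ⨅ i : ↥S, q.A S i (fun j => q.d j.1.1 y) := hb y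
    rw [hyb]
    apply le_antisymm
    · have h1 : ∀ i : ↥S, q.A S i (fun j => q.d j.1.1 y)
          ≤ (⨆ z, q.d z y - φ z) + ((i.1.2 : ℝ≥0∞) - (r₀ : ℝ≥0∞)) := by
        intro i
        refine A_le fun j hj => ?_
        calc q.d j.1.1 y ≤ (q.d j.1.1 y - φ j.1.1) + φ j.1.1 := le_tsub_add
          _ ≤ (⨆ z, q.d z y - φ z) + ((j.1.2 : ℝ≥0∞) - (r₀ : ℝ≥0∞)) :=
            add_le_add (le_iSup (fun z => q.d z y - φ z) j.1.1)
              (ENNReal.le_sub_of_add_le_left ENNReal.coe_ne_top (le_of_lt j.2))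
          _ ≤ (⨆ z, q.d z y - φ z) + ((i.1.2 : ℝ≥0∞) - (r₀ : ℝ≥0∞)) := by
            refine add_le_add_right (tsub_le_tsub_right ?_ _) _
            exact_mod_cast (le_trans le_self_add hj : (j.1.2 : ℝ≥0∞) ≤ (i.1.2 : ℝ≥0∞))
      have h2 : (⨅ i : ↥S, ((i.1.2 : ℝ≥0∞) - (r₀ : ℝ≥0∞))) = 0 := by
        refine le_antisymm ?_ zero_le
        refine ENNReal.le_of_forall_pos_le_add fun ε hε _ => ?_
        obtain ⟨p, hp, hpr⟩ := hsmall ε hε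
        refine (iInf_le _ (⟨p, hp⟩ : ↥S)).trans ?_
        rw [zero_add]
        show ((p.2 : ℝ≥0∞) - (r₀ : ℝ≥0∞)) ≤ (ε : ℝ≥0∞)
        rw [hpr]
        push_cast
        rw [ENNReal.add_sub_cancel_left ENNReal.coe_ne_top]
      calc (⨅ i : ↥S, q.A S i (fun j => q.d j.1.1 y))
          ≤ ⨅ i : ↥S, ((⨆ z, q.d z y - φ z) + ((i.1.2 : ℝ≥0∞) - (r₀ : ℝ≥0∞))) :=
            le_iInf fun i => (iInf_le _ i).trans (h1 i)
        _ = (⨆ z, q.d z y - φ z) + ⨅ i : ↥S, ((i.1.2 : ℝ≥0∞) - (r₀ : ℝ≥0∞)) :=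
            ENNReal.add_iInf.symm
        _ = ⨆ z, q.d z y - φ z := by rw [h2, add_zero]
    · refine iSup_le fun z => le_iInf fun i => ?_
      by_cases hz : φ z = ∞
      · rw [hz]
        simp
      refine ENNReal.le_of_forall_pos_le_add fun ε hε _ => ?_
      have hρm : 0 < rho φ (fun z' => (φ z + (ε : ℝ≥0∞)) - q.d z z') := by
        refine lt_of_lt_of_le ?_
          (le_iSup (fun z' => ((φ z + (ε : ℝ≥0∞)) - q.d z z') - φ z') z)
        rw [q.d_self, tsub_zero, ENNReal.add_sub_cancel_left hz]
        exact_mod_cast hε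
      obtain ⟨w, u, hmem, hw1, hw2⟩ := extraction hw hmin i.2 z (φ z + (ε : ℝ≥0∞)) hρm
      have hdzw : q.d z w ≤ φ z + (ε : ℝ≥0∞) := by
        have hr : (r₀ : ℝ≥0∞) + q.d z w ≤ (r₀ : ℝ≥0∞) + (φ z + (ε : ℝ≥0∞)) := by
          calc (r₀ : ℝ≥0∞) + q.d z w ≤ (u : ℝ≥0∞) + q.d z w := by
                gcongr
                exact_mod_cast le_of_lt (lt_of_le_of_lt le_self_add hmem)
            _ ≤ _ := hw2
        exact (ENNReal.add_le_add_iff_left ENNReal.coe_ne_top).mp hr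
      calc q.d z y - φ z
          ≤ (q.d z w + q.d w y) - φ z := tsub_le_tsub_right (q.d_triangle z w y) _
        _ ≤ ((φ z + (ε : ℝ≥0∞)) + q.d w y) - φ z :=
            tsub_le_tsub_right (add_le_add_left hdzw _) _
        _ = (φ z + ((ε : ℝ≥0∞) + q.d w y)) - φ z := by rw [add_assoc]
        _ = (ε : ℝ≥0∞) + q.d w y := ENNReal.add_sub_cancel_left hz
        _ ≤ (ε : ℝ≥0∞) + q.A S i (fun j => q.d j.1.1 y) :=
            add_le_add_right (le_A (j := ⟨(w, u), hmem⟩) hw1 _) _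
        _ = q.A S i (fun j => q.d j.1.1 y) + (ε : ℝ≥0∞) := add_comm _ _
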